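/- For every z ∈ ℂ with Re z ≤ 0, |12 + 6z + z²| ≤ |12 − 6z + z²|. -/

import Mathlib

/-- **A-stability of the (2,2) Padé approximant** (the Hammer–Hollingsworth stability
function): `|12 + 6z + z²| ≤ |12 − 6z + z²|` on the closed left half-plane. -/
theorem pade22_A_stable (z : ℂ) (hz : z.re ≤ 0) :
    ‖(12 + 6 * z + z ^ 2 : ℂ)‖ ≤ ‖(12 - 6 * z + z ^ 2 : ℂ)‖ := by
  rw [Complex.norm_def, Complex.norm_def]
  apply Real.sqrt_le_sqrt
  simp only [Complex.normSq_apply, Complex.add_re, Complex.add_im, Complex.sub_re,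
    Complex.sub_im, Complex.mul_re, Complex.mul_im, pow_two]
  norm_num
  nlinarith [sq_nonneg z.re, sq_nonneg z.im, mul_nonneg (neg_nonneg.2 hz) (sq_nonneg z.im),
    mul_nonneg (neg_nonneg.2 hz) (sq_nonneg z.re)]
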